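/- Define on U(2) the partial map ℛ sending U = [[z, −λw̄],[w, λz̄]] (with |λ|=1, |z|²+|w|²=1) to the symplectic reduction with respect to W = ℂ ⊕ 0. Then U is clean with W (i.e. Ker(1+U) ∩ W = {0}) if and only if z ≠ −1, and in that case ℛ(U) = λ(1+z̄)/(1+z), which is a unit complex number. In particular, restricted to SU(2) (λ = 1), ℛ maps SU(2)∖{−1} onto S¹∖{−1} via [[z,−w̄],[w,z̄]] ↦ (1+z̄)/(1+z). -/

import Mathlib

noncomputable section

open Matrix

/-- for `U = [[z, -λ w̄],[w, λ z̄]] ∈ U(2)` (with `|λ| = 1`,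
`|z|² + |w|² = 1`), `U` is clean with `W = ℂ ⊕ 0` (i.e. `Ker(1+U) ∩ W = 0`) iff
`z ≠ -1`, and in that case the symplectic reduction `ℛ(U) = T - Z(1+X)⁻¹Y`
equals `λ(1 + z̄)/(1 + z)`, a unit complex number.  For `λ = 1` this gives the map
`SU(2) ∖ {-1} → S¹ ∖ {-1}`, `[[z,-w̄],[w,z̄]] ↦ (1 + z̄)/(1 + z)`, which is onto. -/
theorem reduction_on_U2 :
    (∀ lam z w : ℂ, ‖lam‖ = 1 → ‖z‖ ^ 2 + ‖w‖ ^ 2 = 1 →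
      (!![z, -lam * (starRingEnd ℂ) w; w, lam * (starRingEnd ℂ) z] ∈
          Matrix.unitaryGroup (Fin 2) ℂ) ∧
      ((∀ c : ℂ, ((1 : Matrix (Fin 2) (Fin 2) ℂ) +
            !![z, -lam * (starRingEnd ℂ) w; w, lam * (starRingEnd ℂ) z]).mulVec ![c, 0] = 0 →
          c = 0) ↔ z ≠ -1) ∧
      (z ≠ -1 →
        lam * (starRingEnd ℂ) z - w * (1 + z)⁻¹ * (-lam * (starRingEnd ℂ) w) =
            lam * (1 + (starRingEnd ℂ) z) / (1 + z) ∧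
        ‖lam * (1 + (starRingEnd ℂ) z) / (1 + z)‖ = 1)) ∧
    (∀ mu : ℂ, ‖mu‖ = 1 → mu ≠ -1 →
      ∃ z w : ℂ, ‖z‖ ^ 2 + ‖w‖ ^ 2 = 1 ∧ z ≠ -1 ∧
        (1 + (starRingEnd ℂ) z) / (1 + z) = mu) := by
  constructor
  · intro lam z w hl h
    have hll : lam * (starRingEnd ℂ) lam = 1 := by
      rw [Complex.mul_conj]; norm_cast; simp [← Complex.sq_norm, hl]
    have hzw : z * (starRingEnd ℂ) z + w * (starRingEnd ℂ) w = 1 := by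
      rw [Complex.mul_conj, Complex.mul_conj]; norm_cast
      rw [← Complex.sq_norm, ← Complex.sq_norm]; exact h
    refine ⟨?_, ?_, ?_⟩
    · rw [Matrix.mem_unitaryGroup_iff]
      ext i j
      fin_cases i <;> fin_cases j <;>
        simp only [Matrix.mul_apply, Fin.sum_univ_two, Matrix.conjTranspose_apply,
          Matrix.one_apply, Matrix.cons_val', Matrix.cons_val_zero, Matrix.cons_val_one,
          Matrix.head_cons, Matrix.head_fin_const, Matrix.empty_val', Matrix.cons_val_fin_one,
          star_mul', star_neg, RingHom.map_mul, starRingEnd_self_apply, Complex.star_def,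
          Fin.mk_zero, Fin.mk_one, Matrix.of_apply] <;>
        norm_num <;>
        first
        | linear_combination hzw + w * (starRingEnd ℂ) w * hll
        | linear_combination -z * (starRingEnd ℂ) w * hll
        | linear_combination -w * (starRingEnd ℂ) z * hll
        | linear_combination hzw + z * (starRingEnd ℂ) z * hll
    · constructor
      · intro hc hz
        have hw : w = 0 := by
          have : ‖z‖ = 1 := by rw [hz]; simp
          have hw2 : ‖w‖ ^ 2 = 0 := by rw [this] at h; linarith
          simpa using pow_eq_zero_iff (n := 2) (by norm_num) |>.mp (by
            simpa using hw2)
        have := hc 1 ?_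
        · exact one_ne_zero this
        · funext i
          fin_cases i <;>
            simp [Matrix.mulVec, dotProduct, Fin.sum_univ_two, Matrix.one_apply,
              hz, hw]
      · intro hz c hcv
        have h1z : (1 : ℂ) + z ≠ 0 := by
          intro hh; apply hz; linear_combination hh
        have h0 := congrFun hcv 0
        simp [Matrix.mulVec, dotProduct, Fin.sum_univ_two, Matrix.one_apply] at h0
        rcases h0 with h0 | h0
        · exact absurd (by linear_combination h0) h1z
        · exact h0
    · intro hz
      have h1z : (1 : ℂ) + z ≠ 0 := by
        intro hh
        apply hz
        linear_combination hh
      constructor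
      · field_simp
        ring_nf
        linear_combination lam * hzw
      · rw [norm_div, norm_mul, hl, one_mul]
        have : 1 + (starRingEnd ℂ) z = (starRingEnd ℂ) (1 + z) := by simp
        rw [this, Complex.norm_conj, div_self (norm_ne_zero_iff.mpr h1z)]
  · intro mu hmu hne
    refine ⟨(starRingEnd ℂ) mu, 0, ?_, ?_, ?_⟩
    · simp [hmu]
    · intro hh
      apply hne
      have := congrArg (starRingEnd ℂ) hh
      simpa using this
    · have h1 : (1 : ℂ) + (starRingEnd ℂ) mu ≠ 0 := by
        intro hh
        apply hne
        have := congrArg (starRingEnd ℂ) hh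
        simp at this
        linear_combination this
      have hm : mu * (starRingEnd ℂ) mu = 1 := by
        rw [Complex.mul_conj]; norm_cast; simp [← Complex.sq_norm, hmu]
      rw [starRingEnd_self_apply, div_eq_iff h1]
      linear_combination -hm
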